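/- Let T_S > 0 and T_Z be real numbers with 0 < T_Z ≤ T_S. Let x : ℝ → ℂ satisfy x(t) = 0 for every t not belonging to ⋃_{k ∈ ℤ} [k·T_S, (k+1)·T_S − T_Z]. Let a₁, …, a_L be complex numbers and τ₁, …, τ_L real numbers, with τ_min = min_l τ_l and τ_max = max_l τ_l satisfying τ_max − τ_min < T_Z. Define y(t) = Σ_{l=1}^{L} a_l · x(t − τ_l). Then for every integer m and every t in the open interval ((m+1)·T_S − T_Z + τ_max, (m+1)·T_S + τ_min), we have y(t) = 0. -/
import Mathlib


/-- Equation (9) of the paper: the transmit signal of `U₁` vanishes outside the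
intervals `[k·T_S, (k+1)·T_S − T_Z]`, and if the zero-interval exceeds the delay
spread, the multipath channel output vanishes on each SI-free interval
`((m+1)·T_S − T_Z + τ_max, (m+1)·T_S + τ_min)`. -/
theorem si_free_interval_U1
    (TS TZ : ℝ) (hTS : 0 < TS) (hTZ : 0 < TZ) (hTZS : TZ ≤ TS)
    (x : ℝ → ℂ)
    (hx : ∀ t : ℝ, (¬ ∃ k : ℤ, k * TS ≤ t ∧ t ≤ (k + 1) * TS - TZ) → x t = 0)
    (L : ℕ) (hL : 0 < L) (a : Fin L → ℂ) (τ : Fin L → ℝ)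
    (hspread : (Finset.univ.sup' (Finset.univ_nonempty_iff.mpr
        (Fin.pos_iff_nonempty.mp hL)) τ) -
      (Finset.univ.inf' (Finset.univ_nonempty_iff.mpr
        (Fin.pos_iff_nonempty.mp hL)) τ) < TZ) :
    ∀ m : ℤ, ∀ t : ℝ,
      (m + 1) * TS - TZ + (Finset.univ.sup' (Finset.univ_nonempty_iff.mpr
        (Fin.pos_iff_nonempty.mp hL)) τ) < t →
      t < (m + 1) * TS + (Finset.univ.inf' (Finset.univ_nonempty_iff.mpr
        (Fin.pos_iff_nonempty.mp hL)) τ) →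
      (∑ l : Fin L, a l * x (t - τ l)) = 0 := by
  intro m t ht1 ht2
  set ne := Finset.univ_nonempty_iff.mpr (Fin.pos_iff_nonempty.mp hL)
  apply Finset.sum_eq_zero
  intro l _
  have hmax : τ l ≤ Finset.univ.sup' ne τ := Finset.le_sup' τ (Finset.mem_univ l)
  have hmin : Finset.univ.inf' ne τ ≤ τ l := Finset.inf'_le τ (Finset.mem_univ l)
  have hx0 : x (t - τ l) = 0 := by
    apply hx
    rintro ⟨k, hk1, hk2⟩
    have hks : (k : ℝ) < m + 1 := by
      have : (k : ℝ) * TS < ((m : ℝ) + 1) * TS := by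
        nlinarith
      exact lt_of_mul_lt_mul_right this hTS.le
    have hk : (k : ℤ) ≤ m := by exact_mod_cast Int.lt_add_one_iff.mp (by exact_mod_cast hks)
    have : ((k : ℝ) + 1) * TS ≤ ((m : ℝ) + 1) * TS := by
      have : (k : ℝ) + 1 ≤ (m : ℝ) + 1 := by
        have : (k : ℝ) ≤ m := by exact_mod_cast hk
        linarith
      nlinarith
    nlinarith
  rw [hx0, mul_zero]
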